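/- Let b, b' : [0,1] → [0,1] be measurable and G_b, G_{b'} the associated boundary fragments. If f, g are measurable functions on [0,1]² with ‖f‖_∞ ∨ ‖g‖_∞ ≤ c₁, then |R(G_b) − R(G_{b'})| ≤ c₁ ∫₀¹ |b − b'| dx₁, where R(G) = (1/2)(∫_{[0,1]²∖G} f + ∫_G g). -/

import Mathlib

open MeasureTheory Set

lemma ind_Icc_int (a a' : ℝ) (ha : 0 ≤ a) (h : a ≤ a') :
    ∫ y : ℝ, |(Icc (0:ℝ) a).indicator (fun _ => (1:ℝ)) y
      - (Icc (0:ℝ) a').indicator (fun _ => (1:ℝ)) y| = a' - a := by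
  have heq : (fun y => |(Icc (0:ℝ) a).indicator (fun _ => (1:ℝ)) y
      - (Icc (0:ℝ) a').indicator (fun _ => (1:ℝ)) y|)
      = (Ioc a a').indicator (fun _ => (1:ℝ)) := by
    funext y
    by_cases h1 : y ∈ Icc (0:ℝ) a
    · have h2 : y ∈ Icc (0:ℝ) a' := ⟨h1.1, h1.2.trans h⟩
      have h3 : y ∉ Ioc a a' := fun hy => absurd h1.2 (not_le.2 hy.1)
      simp [h1, h2, h3]
    · by_cases h2 : y ∈ Icc (0:ℝ) a'
      · have h3 : y ∈ Ioc a a' := ⟨lt_of_not_ge (fun hy => h1 ⟨h2.1, hy⟩), h2.2⟩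
        simp [h1, h2, h3]
      · have h3 : y ∉ Ioc a a' := fun hy => h2 ⟨ha.trans hy.1.le, hy.2⟩
        simp [h1, h2, h3]
  rw [heq, integral_indicator measurableSet_Ioc]
  simp [Real.volume_Ioc, ENNReal.toReal_ofReal (sub_nonneg.2 h), h]

lemma ind_Icc_int' (a a' : ℝ) (ha : 0 ≤ a) (ha' : 0 ≤ a') :
    ∫ y : ℝ, |(Icc (0:ℝ) a).indicator (fun _ => (1:ℝ)) y
      - (Icc (0:ℝ) a').indicator (fun _ => (1:ℝ)) y| = |a - a'| := by
  rcases le_total a a' with h | h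
  · rw [ind_Icc_int a a' ha h, abs_of_nonpos (sub_nonpos.2 h), neg_sub]
  · have := ind_Icc_int a' a ha' h
    rw [abs_of_nonneg (sub_nonneg.2 h)]
    rw [← this]
    congr 1
    funext y
    rw [abs_sub_comm]

theorem risk_lipschitz_in_boundary (b b' : ℝ → ℝ)
    (hb : Measurable b) (hb' : Measurable b')
    (hbr : ∀ x ∈ Icc (0:ℝ) 1, b x ∈ Icc (0:ℝ) 1)
    (hb'r : ∀ x ∈ Icc (0:ℝ) 1, b' x ∈ Icc (0:ℝ) 1)
    (f g : ℝ × ℝ → ℝ) (hf : Measurable f) (hg : Measurable g)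
    (c₁ : ℝ) (hfb : ∀ x, |f x| ≤ c₁) (hgb : ∀ x, |g x| ≤ c₁) :
    |((1 : ℝ) / 2 * (∫ x in (Icc (0:ℝ) 1 ×ˢ Icc (0:ℝ) 1) \
            {p : ℝ × ℝ | p.1 ∈ Icc (0:ℝ) 1 ∧ p.2 ∈ Icc 0 (b p.1)}, f x)
        + 1 / 2 * ∫ x in {p : ℝ × ℝ | p.1 ∈ Icc (0:ℝ) 1 ∧ p.2 ∈ Icc 0 (b p.1)}, g x)
      - (1 / 2 * (∫ x in (Icc (0:ℝ) 1 ×ˢ Icc (0:ℝ) 1) \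
            {p : ℝ × ℝ | p.1 ∈ Icc (0:ℝ) 1 ∧ p.2 ∈ Icc 0 (b' p.1)}, f x)
        + 1 / 2 * ∫ x in {p : ℝ × ℝ | p.1 ∈ Icc (0:ℝ) 1 ∧ p.2 ∈ Icc 0 (b' p.1)}, g x)|
      ≤ c₁ * ∫ x in Icc (0:ℝ) 1, |b x - b' x| := by
  set Q : Set (ℝ × ℝ) := Icc (0:ℝ) 1 ×ˢ Icc (0:ℝ) 1 with hQdef
  set G : Set (ℝ × ℝ) := {p : ℝ × ℝ | p.1 ∈ Icc (0:ℝ) 1 ∧ p.2 ∈ Icc 0 (b p.1)} with hGdef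
  set G' : Set (ℝ × ℝ) := {p : ℝ × ℝ | p.1 ∈ Icc (0:ℝ) 1 ∧ p.2 ∈ Icc 0 (b' p.1)} with hG'def
  have hGm : MeasurableSet G := by
    have : G = {p : ℝ × ℝ | p.1 ∈ Icc (0:ℝ) 1} ∩ ({p : ℝ × ℝ | 0 ≤ p.2} ∩ {p : ℝ × ℝ | p.2 ≤ b p.1}) := by
      ext p; simp [hGdef, mem_Icc, and_assoc]
    rw [this]
    exact ((measurable_fst measurableSet_Icc)).inter
      ((measurableSet_le measurable_const measurable_snd).inter
        (measurableSet_le measurable_snd (hb.comp measurable_fst)))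
  have hG'm : MeasurableSet G' := by
    have : G' = {p : ℝ × ℝ | p.1 ∈ Icc (0:ℝ) 1} ∩ ({p : ℝ × ℝ | 0 ≤ p.2} ∩ {p : ℝ × ℝ | p.2 ≤ b' p.1}) := by
      ext p; simp [hG'def, mem_Icc, and_assoc]
    rw [this]
    exact ((measurable_fst measurableSet_Icc)).inter
      ((measurableSet_le measurable_const measurable_snd).inter
        (measurableSet_le measurable_snd (hb'.comp measurable_fst)))
  have hGQ : G ⊆ Q := by
    rintro p ⟨h1, h2⟩
    exact ⟨h1, ⟨h2.1, h2.2.trans (hbr _ h1).2⟩⟩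
  have hG'Q : G' ⊆ Q := by
    rintro p ⟨h1, h2⟩
    exact ⟨h1, ⟨h2.1, h2.2.trans (hb'r _ h1).2⟩⟩
  have hQm : MeasurableSet Q := measurableSet_Icc.prod measurableSet_Icc
  haveI : IsFiniteMeasure (volume.restrict Q) := by
    constructor
    rw [Measure.restrict_apply_univ]
    exact ((isCompact_Icc.prod isCompact_Icc).measure_lt_top)
  have hc₁ : 0 ≤ c₁ := le_trans (abs_nonneg _) (hfb 0)
  -- integrability
  have hfQ : IntegrableOn f Q := by
    refine ⟨hf.aestronglyMeasurable, ?_⟩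
    exact HasFiniteIntegral.of_bounded (C := c₁) (ae_of_all _ fun x => by
      simpa [Real.norm_eq_abs] using hfb x)
  have hgQ : IntegrableOn g Q := by
    refine ⟨hg.aestronglyMeasurable, ?_⟩
    exact HasFiniteIntegral.of_bounded (C := c₁) (ae_of_all _ fun x => by
      simpa [Real.norm_eq_abs] using hgb x)
  have hfG : IntegrableOn f G := hfQ.mono_set hGQ
  have hfG' : IntegrableOn f G' := hfQ.mono_set hG'Q
  have hgG : IntegrableOn g G := hgQ.mono_set hGQ
  have hgG' : IntegrableOn g G' := hgQ.mono_set hG'Q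
  -- split the diff integrals
  rw [integral_diff hGm hfQ hGQ, integral_diff hG'm hfQ hG'Q]
  -- rewrite the LHS as an integral of a single function
  set φ : ℝ × ℝ → ℝ := fun p => (1/2 : ℝ) *
    ((G'.indicator f p - G.indicator f p) + (G.indicator g p - G'.indicator g p)) with hφdef
  have hiGf : Integrable (G.indicator f) := (integrable_indicator_iff hGm).2 hfG
  have hiG'f : Integrable (G'.indicator f) := (integrable_indicator_iff hG'm).2 hfG'
  have hiGg : Integrable (G.indicator g) := (integrable_indicator_iff hGm).2 hgG
  have hiG'g : Integrable (G'.indicator g) := (integrable_indicator_iff hG'm).2 hgG'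
  have hA : Integrable (fun p => G'.indicator f p - G.indicator f p) := hiG'f.sub hiGf
  have hB : Integrable (fun p => G.indicator g p - G'.indicator g p) := hiGg.sub hiG'g
  have hEint : ∫ p, φ p = (1/2 : ℝ) *
      ((∫ x in G', f x) - (∫ x in G, f x) + ((∫ x in G, g x) - (∫ x in G', g x))) := by
    have h0 : ∫ p, φ p = (1/2 : ℝ) * ∫ p,
        ((G'.indicator f p - G.indicator f p) + (G.indicator g p - G'.indicator g p)) := by
      rw [← integral_const_mul]
    rw [h0, integral_add hA hB, integral_sub hiG'f hiGf,
      integral_sub hiGg hiG'g, integral_indicator hGm, integral_indicator hG'm,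
      integral_indicator hGm, integral_indicator hG'm]
  have hLHS : (1 : ℝ) / 2 * ((∫ x in Q, f x) - (∫ x in G, f x))
        + 1 / 2 * (∫ x in G, g x)
      - (1 / 2 * ((∫ x in Q, f x) - (∫ x in G', f x))
        + 1 / 2 * (∫ x in G', g x)) = ∫ p, φ p := by
    rw [hEint]; ring
  rw [hLHS]
  -- the dominating function
  set h : ℝ × ℝ → ℝ := fun p => c₁ * |G.indicator (fun _ => (1:ℝ)) p
    - G'.indicator (fun _ => (1:ℝ)) p| with hhdef
  have hiG1 : Integrable (G.indicator (fun _ => (1:ℝ))) :=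
    (integrable_indicator_iff hGm).2 (integrableOn_const
      (lt_of_le_of_lt (measure_mono hGQ) (isCompact_Icc.prod isCompact_Icc).measure_lt_top).ne)
  have hiG'1 : Integrable (G'.indicator (fun _ => (1:ℝ))) :=
    (integrable_indicator_iff hG'm).2 (integrableOn_const
      (lt_of_le_of_lt (measure_mono hG'Q) (isCompact_Icc.prod isCompact_Icc).measure_lt_top).ne)
  have hhint : Integrable h := ((hiG1.sub hiG'1).abs).const_mul c₁
  have hbound : ∀ p, ‖φ p‖ ≤ h p := by
    intro p
    have hf' := abs_le.1 (hfb p)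
    have hg' := abs_le.1 (hgb p)
    rw [Real.norm_eq_abs, hφdef, hhdef]
    by_cases h1 : p ∈ G <;> by_cases h2 : p ∈ G' <;>
      simp only [Set.indicator_apply, h1, h2, if_true, if_false, sub_self, sub_zero,
        zero_sub, add_zero, zero_add, abs_zero, mul_zero, abs_one, mul_one, abs_neg]
    · simp
    · rw [abs_le]; constructor <;> linarith
    · rw [abs_le]; constructor <;> linarith
    · simp [hc₁]
  have key : ‖∫ p, φ p‖ ≤ ∫ p, h p :=
    norm_integral_le_of_norm_le hhint (ae_of_all _ hbound)
  rw [Real.norm_eq_abs] at key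
  refine key.trans ?_
  -- compute ∫ h
  have hhsplit : ∫ p, h p = c₁ * ∫ p : ℝ × ℝ, |G.indicator (fun _ => (1:ℝ)) p
      - G'.indicator (fun _ => (1:ℝ)) p| := integral_const_mul _ _
  rw [hhsplit]
  have habs : Integrable (fun p : ℝ × ℝ => |G.indicator (fun _ => (1:ℝ)) p
      - G'.indicator (fun _ => (1:ℝ)) p|) := (hiG1.sub hiG'1).abs
  have hfub : ∫ p : ℝ × ℝ, |G.indicator (fun _ => (1:ℝ)) p
      - G'.indicator (fun _ => (1:ℝ)) p|
      = ∫ x : ℝ, ∫ y : ℝ, |G.indicator (fun _ => (1:ℝ)) (x, y)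
        - G'.indicator (fun _ => (1:ℝ)) (x, y)| := by
    rw [Measure.volume_eq_prod] at habs ⊢
    exact integral_prod _ habs
  rw [hfub]
  have hinner : (fun x : ℝ => ∫ y : ℝ, |G.indicator (fun _ => (1:ℝ)) (x, y)
        - G'.indicator (fun _ => (1:ℝ)) (x, y)|)
      = (Icc (0:ℝ) 1).indicator (fun x => |b x - b' x|) := by
    funext x
    by_cases hx : x ∈ Icc (0:ℝ) 1
    · rw [indicator_of_mem hx]
      have e1 : ∀ y : ℝ, G.indicator (fun _ => (1:ℝ)) (x, y)
          = (Icc 0 (b x)).indicator (fun _ => (1:ℝ)) y := by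
        intro y
        by_cases hy : y ∈ Icc 0 (b x)
        · rw [indicator_of_mem hy, indicator_of_mem (show (x,y) ∈ G from ⟨hx, hy⟩)]
        · rw [indicator_of_notMem hy, indicator_of_notMem (fun hm => hy hm.2)]
      have e2 : ∀ y : ℝ, G'.indicator (fun _ => (1:ℝ)) (x, y)
          = (Icc 0 (b' x)).indicator (fun _ => (1:ℝ)) y := by
        intro y
        by_cases hy : y ∈ Icc 0 (b' x)
        · rw [indicator_of_mem hy, indicator_of_mem (show (x,y) ∈ G' from ⟨hx, hy⟩)]
        · rw [indicator_of_notMem hy, indicator_of_notMem (fun hm => hy hm.2)]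
      simp_rw [e1, e2]
      exact ind_Icc_int' (b x) (b' x) (hbr x hx).1 (hb'r x hx).1
    · rw [indicator_of_notMem hx]
      have e1 : ∀ y : ℝ, G.indicator (fun _ => (1:ℝ)) (x, y) = 0 := fun y =>
        indicator_of_notMem (fun hm => hx hm.1) _
      have e2 : ∀ y : ℝ, G'.indicator (fun _ => (1:ℝ)) (x, y) = 0 := fun y =>
        indicator_of_notMem (fun hm => hx hm.1) _
      simp_rw [e1, e2, sub_zero, abs_zero, integral_zero]
  rw [hinner, integral_indicator measurableSet_Icc]
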